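/- Assume in addition that r'(s) > 0 for all s ∈ [0, c_*], and let g : [0,∞) → ℝ be strictly increasing with g(r(c_*)) ≤ 0. Then there is no equilibrium: there exist no h > 0 and twice continuously differentiable c : [0,h] → ℝ with κ·c''(z) = r(c(z)) on [0,h], c'(0) = 0, c(h) + (L·κ/κ_L)·c'(h) = c_*, and ∫₀^h g(r(c(z))) dz = 0. -/

import Mathlib

open Set MeasureTheory intervalIntegral Filter Topology

theorem no_equilibrium_for_increasing_g
    (κ κL L cstar : ℝ) (hκ : 0 < κ) (hκL : 0 < κL) (hL : 0 < L) (hc : 0 < cstar)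
    (r : ℝ → ℝ) (hr : ContDiff ℝ 1 r) (hrsign : ∀ s : ℝ, s ≠ 0 → s * r s > 0)
    (hr' : ∀ s : ℝ, 0 ≤ deriv r s)
    (hr'pos : ∀ s ∈ Icc (0:ℝ) cstar, 0 < deriv r s)
    (g : ℝ → ℝ) (hg : StrictMonoOn g (Ici (0:ℝ)))
    (hgc : g (r cstar) ≤ 0) :
    ¬ ∃ (h : ℝ) (c c' c'' : ℝ → ℝ), 0 < h ∧
      (∀ z ∈ Icc (0:ℝ) h, HasDerivWithinAt c (c' z) (Icc (0:ℝ) h) z) ∧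
      (∀ z ∈ Icc (0:ℝ) h, HasDerivWithinAt c' (c'' z) (Icc (0:ℝ) h) z) ∧
      ContinuousOn c'' (Icc (0:ℝ) h) ∧
      (∀ z ∈ Icc (0:ℝ) h, κ * c'' z = r (c z)) ∧
      c' 0 = 0 ∧
      c h + (L * κ / κL) * c' h = cstar ∧
      (∫ z in (0:ℝ)..h, g (r (c z))) = 0 := by
  rintro ⟨h, c, c', c'', hh, hdc, hdc', hc''cont, hode, hc'0, hbc, hint⟩
  set α := L * κ / κL with hα
  have hαpos : 0 < α := by positivity
  have h0mem : (0:ℝ) ∈ Icc (0:ℝ) h := ⟨le_rfl, hh.le⟩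
  have hhmem : h ∈ Icc (0:ℝ) h := ⟨hh.le, le_rfl⟩
  have hccont : ContinuousOn c (Icc 0 h) := fun z hz => (hdc z hz).continuousWithinAt
  have hc'cont : ContinuousOn c' (Icc 0 h) := fun z hz => (hdc' z hz).continuousWithinAt
  -- basic facts about r
  have hrcont : Continuous r := hr.continuous
  have hrdiff : Differentiable ℝ r := hr.differentiable one_ne_zero
  have hrmono : Monotone r := monotone_of_deriv_nonneg hrdiff hr'
  have hrpos : ∀ s : ℝ, 0 < s → 0 < r s := by
    intro s hs
    rcases mul_pos_iff.mp (hrsign s hs.ne') with ⟨_, h2⟩ | ⟨h1, _⟩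
    · exact h2
    · linarith
  have hrneg : ∀ s : ℝ, s < 0 → r s < 0 := by
    intro s hs
    rcases mul_pos_iff.mp (hrsign s hs.ne) with ⟨h1, _⟩ | ⟨_, h2⟩
    · linarith
    · exact h2
  have hr0 : r 0 = 0 := by
    have ht : Tendsto r (𝓝[>] (0:ℝ)) (𝓝 (r 0)) :=
      (hrcont.tendsto 0).mono_left nhdsWithin_le_nhds
    have ht' : Tendsto r (𝓝[<] (0:ℝ)) (𝓝 (r 0)) :=
      (hrcont.tendsto 0).mono_left nhdsWithin_le_nhds
    have h1 : 0 ≤ r 0 :=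
      ge_of_tendsto ht (eventually_nhdsWithin_of_forall fun s hs => (hrpos s hs).le)
    have h2 : r 0 ≤ 0 :=
      le_of_tendsto ht' (eventually_nhdsWithin_of_forall fun s hs => (hrneg s hs).le)
    linarith
  have hrsm : StrictMonoOn r (Icc 0 cstar) :=
    strictMonoOn_of_deriv_pos (convex_Icc _ _) hrcont.continuousOn
      (fun x hx => hr'pos x (interior_subset hx))
  -- derivatives at interior points
  have hderivc : ∀ z ∈ Ioo (0:ℝ) h, HasDerivAt c (c' z) z := fun z hz =>
    (hdc z (Ioo_subset_Icc_self hz)).hasDerivAt (Icc_mem_nhds hz.1 hz.2)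
  have hderivc' : ∀ z ∈ Ioo (0:ℝ) h, HasDerivAt c' (c'' z) z := fun z hz =>
    (hdc' z (Ioo_subset_Icc_self hz)).hasDerivAt (Icc_mem_nhds hz.1 hz.2)
  have hc''eq : ∀ z ∈ Icc (0:ℝ) h, c'' z = r (c z) / κ := by
    intro z hz
    have := hode z hz
    field_simp
    linarith
  -- monotonicity helpers
  have mono_c' : ∀ b ∈ Icc (0:ℝ) h, (∀ z ∈ Ioo (0:ℝ) b, 0 ≤ r (c z)) →
      MonotoneOn c' (Icc 0 b) := by
    intro b hb hpos
    have hsub : Ioo (0:ℝ) b ⊆ Ioo (0:ℝ) h := Ioo_subset_Ioo le_rfl hb.2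
    apply monotoneOn_of_deriv_nonneg (convex_Icc 0 b)
      (hc'cont.mono (Icc_subset_Icc_right hb.2))
    · intro x hx
      rw [interior_Icc] at hx
      exact ((hderivc' x (hsub hx)).differentiableAt).differentiableWithinAt
    · intro x hx
      rw [interior_Icc] at hx
      rw [(hderivc' x (hsub hx)).deriv, hc''eq x (Ioo_subset_Icc_self (hsub hx))]
      exact div_nonneg (hpos x hx) hκ.le
  have anti_c' : ∀ b ∈ Icc (0:ℝ) h, (∀ z ∈ Ioo (0:ℝ) b, r (c z) ≤ 0) →
      AntitoneOn c' (Icc 0 b) := by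
    intro b hb hneg
    have hsub : Ioo (0:ℝ) b ⊆ Ioo (0:ℝ) h := Ioo_subset_Ioo le_rfl hb.2
    apply antitoneOn_of_deriv_nonpos (convex_Icc 0 b)
      (hc'cont.mono (Icc_subset_Icc_right hb.2))
    · intro x hx
      rw [interior_Icc] at hx
      exact ((hderivc' x (hsub hx)).differentiableAt).differentiableWithinAt
    · intro x hx
      rw [interior_Icc] at hx
      rw [(hderivc' x (hsub hx)).deriv, hc''eq x (Ioo_subset_Icc_self (hsub hx))]
      exact div_nonpos_of_nonpos_of_nonneg (hneg x hx) hκ.le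
  have mono_c : ∀ b ∈ Icc (0:ℝ) h, (∀ z ∈ Ioo (0:ℝ) b, 0 ≤ c' z) →
      MonotoneOn c (Icc 0 b) := by
    intro b hb hpos
    have hsub : Ioo (0:ℝ) b ⊆ Ioo (0:ℝ) h := Ioo_subset_Ioo le_rfl hb.2
    apply monotoneOn_of_deriv_nonneg (convex_Icc 0 b)
      (hccont.mono (Icc_subset_Icc_right hb.2))
    · intro x hx
      rw [interior_Icc] at hx
      exact ((hderivc x (hsub hx)).differentiableAt).differentiableWithinAt
    · intro x hx
      rw [interior_Icc] at hx
      rw [(hderivc x (hsub hx)).deriv]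
      exact hpos x hx
  have anti_c : ∀ b ∈ Icc (0:ℝ) h, (∀ z ∈ Ioo (0:ℝ) b, c' z ≤ 0) →
      AntitoneOn c (Icc 0 b) := by
    intro b hb hneg
    have hsub : Ioo (0:ℝ) b ⊆ Ioo (0:ℝ) h := Ioo_subset_Ioo le_rfl hb.2
    apply antitoneOn_of_deriv_nonpos (convex_Icc 0 b)
      (hccont.mono (Icc_subset_Icc_right hb.2))
    · intro x hx
      rw [interior_Icc] at hx
      exact ((hderivc x (hsub hx)).differentiableAt).differentiableWithinAt
    · intro x hx
      rw [interior_Icc] at hx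
      rw [(hderivc x (hsub hx)).deriv]
      exact hneg x hx
  -- trichotomy on c 0
  rcases lt_trichotomy (c 0) 0 with hc0 | hc0 | hc0
  · -- c 0 < 0 : c stays negative, c' ≤ 0, boundary condition fails
    have cneg : ∀ z ∈ Icc (0:ℝ) h, c z < 0 := by
      by_contra hcon
      push_neg at hcon
      obtain ⟨z₀, hz₀, hz₀c⟩ := hcon
      set T : Set ℝ := {z ∈ Icc (0:ℝ) h | 0 ≤ c z} with hT
      have hTne : T.Nonempty := ⟨z₀, hz₀, hz₀c⟩
      have hTclosed : IsClosed T :=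
        hccont.preimage_isClosed_of_isClosed isClosed_Icc isClosed_Ici
      have hTbdd : BddBelow T := ⟨0, fun z hz => hz.1.1⟩
      set z₁ := sInf T with hz₁
      have hz₁T : z₁ ∈ T := hTclosed.csInf_mem hTne hTbdd
      have hz₁pos : 0 < z₁ := by
        rcases (hz₁T.1.1).lt_or_eq with h' | h'
        · exact h'
        · exfalso; have h2 := hz₁T.2; rw [← h'] at h2; linarith
      have hbelow : ∀ y ∈ Ico (0:ℝ) z₁, c y < 0 := by
        intro y hy
        by_contra hy'
        push_neg at hy'
        have : y ∈ T := ⟨⟨hy.1, le_trans hy.2.le hz₁T.1.2⟩, hy'⟩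
        exact absurd (csInf_le hTbdd this) (not_le.mpr hy.2)
      have hz₁Icc : z₁ ∈ Icc (0:ℝ) h := hz₁T.1
      have hc'le : ∀ z ∈ Icc (0:ℝ) z₁, c' z ≤ 0 := by
        intro z hz
        have := anti_c' z₁ hz₁Icc (fun y hy =>
          (hrneg _ (hbelow y ⟨hy.1.le, hy.2⟩)).le) ⟨le_rfl, hz₁pos.le⟩ hz hz.1
        simpa [hc'0] using this
      have := anti_c z₁ hz₁Icc (fun y hy => hc'le y ⟨hy.1.le, hy.2.le⟩)
        ⟨le_rfl, hz₁pos.le⟩ ⟨hz₁pos.le, le_rfl⟩ hz₁pos.le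
      linarith [hz₁T.2]
    have hc'le : ∀ z ∈ Icc (0:ℝ) h, c' z ≤ 0 := by
      intro z hz
      have := anti_c' h hhmem (fun y hy =>
        (hrneg _ (cneg y (Ioo_subset_Icc_self hy))).le) h0mem hz hz.1
      simpa [hc'0] using this
    have hch : c h < 0 := cneg h hhmem
    have : α * c' h ≤ 0 := mul_nonpos_of_nonneg_of_nonpos hαpos.le (hc'le h hhmem)
    linarith
  · -- c 0 = 0 : Gronwall forces c ≡ 0, contradicting the boundary condition
    obtain ⟨M, hM⟩ := (isCompact_Icc).exists_bound_of_continuousOn hccont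
    have hM0 : (0:ℝ) ≤ M := le_trans (norm_nonneg _) (hM 0 h0mem)
    obtain ⟨Kr, hKr⟩ := (isCompact_Icc (a := -M) (b := M)).exists_bound_of_continuousOn
      ((hr.continuous_deriv le_rfl).continuousOn)
    have hKr0 : (0:ℝ) ≤ Kr := le_trans (norm_nonneg _) (hKr 0 ⟨by linarith, hM0⟩)
    have hrl : ∀ x ∈ Icc (-M) M, |r x| ≤ Kr * |x| := by
      intro x hx
      have := Convex.norm_image_sub_le_of_norm_hasDerivWithin_le
        (f := r) (f' := deriv r) (s := Icc (-M) M)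
        (fun y hy => (hrdiff y).hasDerivAt.hasDerivWithinAt) hKr (convex_Icc _ _)
        (⟨by linarith, hM0⟩ : (0:ℝ) ∈ Icc (-M) M) hx
      simpa [hr0, Real.norm_eq_abs] using this
    have hcmem : ∀ z ∈ Icc (0:ℝ) h, c z ∈ Icc (-M) M := by
      intro z hz
      have := hM z hz
      rw [Real.norm_eq_abs, abs_le] at this
      exact this
    set u : ℝ → ℝ := fun z => c z * c z + c' z * c' z with hu
    set u' : ℝ → ℝ := fun z => (c' z * c z + c z * c' z) + (c'' z * c' z + c' z * c'' z)
      with hu'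
    set K : ℝ := 1 + Kr / κ with hK
    have hud : ∀ x ∈ Ico (0:ℝ) h, HasDerivWithinAt u (u' x) (Ici x) x := by
      intro x hx
      have hmem : Icc (0:ℝ) h ∈ 𝓝[Ici x] x := by
        have : Icc x h ∈ 𝓝[Ici x] x := Icc_mem_nhdsGE_of_mem ⟨le_rfl, hx.2⟩
        exact mem_of_superset this (Icc_subset_Icc hx.1 le_rfl)
      have h1 : HasDerivWithinAt c (c' x) (Ici x) x :=
        (hdc x ⟨hx.1, hx.2.le⟩).mono_of_mem_nhdsWithin hmem
      have h2 : HasDerivWithinAt c' (c'' x) (Ici x) x :=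
        (hdc' x ⟨hx.1, hx.2.le⟩).mono_of_mem_nhdsWithin hmem
      exact (h1.mul h1).add (h2.mul h2)
    have hbound : ∀ x ∈ Ico (0:ℝ) h, u' x ≤ K * u x + 0 := by
      intro x hx
      have hxI : x ∈ Icc (0:ℝ) h := ⟨hx.1, hx.2.le⟩
      set a := c x
      set b := c' x
      have hRa : |r a| ≤ Kr * |a| := hrl a (hcmem x hxI)
      have hode' : κ * c'' x = r a := hode x hxI
      have key : κ * u' x ≤ κ * (K * u x + 0) := by
        have e1 : κ * u' x = κ * (2 * (a * b)) + 2 * (b * r a) := by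
          simp only [hu']
          linear_combination 2 * b * (hode x hxI)
        have e2 : κ * (K * u x + 0) = (κ + Kr) * (a * a + b * b) := by
          simp only [hu, hK]
          field_simp
          ring
        rw [e1, e2]
        have h1 : b * r a ≤ |b| * |r a| := le_trans (le_abs_self _) (abs_mul _ _).le
        have h2 : |b| * |r a| ≤ |b| * (Kr * |a|) :=
          mul_le_mul_of_nonneg_left hRa (abs_nonneg _)
        have h3 : a * b ≤ |a| * |b| := le_trans (le_abs_self _) (abs_mul _ _).le
        nlinarith [sq_nonneg (a - b), sq_nonneg (|a| - |b|), sq_abs a, sq_abs b,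
          abs_nonneg a, abs_nonneg b,
          mul_nonneg hKr0 (sq_nonneg (|a| - |b|)), mul_nonneg hκ.le (sq_nonneg (a - b))]
      exact le_of_mul_le_mul_left key hκ
    have hucont : ContinuousOn u (Icc 0 h) :=
      (hccont.mul hccont).add (hc'cont.mul hc'cont)
    have hu0 : u 0 ≤ 0 := by simp [hu, hc0, hc'0]
    have humain : ∀ x ∈ Icc (0:ℝ) h, u x ≤ gronwallBound 0 K 0 (x - 0) :=
      le_gronwallBound_of_liminf_deriv_right_le hucont
        (fun x hx _ hr' => (hud x hx).liminf_right_slope_le hr') hu0 hbound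
    have huh : c h * c h + c' h * c' h = 0 := by
      have h1 := humain h hhmem
      rw [gronwallBound_ε0_δ0] at h1
      have h2 : u h = c h * c h + c' h * c' h := by simp [hu]
      have h3 := mul_self_nonneg (c h)
      have h4 := mul_self_nonneg (c' h)
      rw [h2] at h1
      linarith
    have hch : c h = 0 := by
      have h3 := mul_self_nonneg (c h)
      have h4 := mul_self_nonneg (c' h)
      have : c h * c h = 0 := by linarith
      exact mul_self_eq_zero.mp this
    have hc'h : c' h = 0 := by
      have h3 := mul_self_nonneg (c h)
      have h4 := mul_self_nonneg (c' h)
      have : c' h * c' h = 0 := by linarith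
      exact mul_self_eq_zero.mp this
    rw [hch, hc'h] at hbc
    simp at hbc
    linarith
  · -- c 0 > 0 : c stays positive and increasing, integral is strictly negative
    have cpos : ∀ z ∈ Icc (0:ℝ) h, 0 < c z := by
      by_contra hcon
      push_neg at hcon
      obtain ⟨z₀, hz₀, hz₀c⟩ := hcon
      set T : Set ℝ := {z ∈ Icc (0:ℝ) h | c z ≤ 0} with hT
      have hTne : T.Nonempty := ⟨z₀, hz₀, hz₀c⟩
      have hTclosed : IsClosed T :=
        hccont.preimage_isClosed_of_isClosed isClosed_Icc isClosed_Iic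
      have hTbdd : BddBelow T := ⟨0, fun z hz => hz.1.1⟩
      set z₁ := sInf T with hz₁
      have hz₁T : z₁ ∈ T := hTclosed.csInf_mem hTne hTbdd
      have hz₁pos : 0 < z₁ := by
        rcases (hz₁T.1.1).lt_or_eq with h' | h'
        · exact h'
        · exfalso; have h2 := hz₁T.2; rw [← h'] at h2; linarith
      have hbelow : ∀ y ∈ Ico (0:ℝ) z₁, 0 < c y := by
        intro y hy
        by_contra hy'
        push_neg at hy'
        have : y ∈ T := ⟨⟨hy.1, le_trans hy.2.le hz₁T.1.2⟩, hy'⟩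
        exact absurd (csInf_le hTbdd this) (not_le.mpr hy.2)
      have hz₁Icc : z₁ ∈ Icc (0:ℝ) h := hz₁T.1
      have hc'ge : ∀ z ∈ Icc (0:ℝ) z₁, 0 ≤ c' z := by
        intro z hz
        have := mono_c' z₁ hz₁Icc (fun y hy =>
          (hrpos _ (hbelow y ⟨hy.1.le, hy.2⟩)).le) ⟨le_rfl, hz₁pos.le⟩ hz hz.1
        simpa [hc'0] using this
      have := mono_c z₁ hz₁Icc (fun y hy => hc'ge y ⟨hy.1.le, hy.2.le⟩)
        ⟨le_rfl, hz₁pos.le⟩ ⟨hz₁pos.le, le_rfl⟩ hz₁pos.le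
      linarith [hz₁T.2]
    have hc'ge : ∀ z ∈ Icc (0:ℝ) h, 0 ≤ c' z := by
      intro z hz
      have := mono_c' h hhmem (fun y hy =>
        (hrpos _ (cpos y (Ioo_subset_Icc_self hy))).le) h0mem hz hz.1
      simpa [hc'0] using this
    have monoc : MonotoneOn c (Icc 0 h) :=
      mono_c h hhmem (fun y hy => hc'ge y (Ioo_subset_Icc_self hy))
    -- c' is strictly increasing, so c' h > 0
    have hc'sm : StrictMonoOn c' (Icc 0 h) := by
      apply strictMonoOn_of_deriv_pos (convex_Icc 0 h) hc'cont
      intro x hx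
      rw [interior_Icc] at hx
      rw [(hderivc' x hx).deriv, hc''eq x (Ioo_subset_Icc_self hx)]
      exact div_pos (hrpos _ (cpos x (Ioo_subset_Icc_self hx))) hκ
    have hc'hpos : 0 < c' h := by
      have := hc'sm h0mem hhmem hh
      rwa [hc'0] at this
    have hchlt : c h < cstar := by nlinarith
    have hchpos : 0 < c h := cpos h hhmem
    -- pointwise bound : g (r (c z)) ≤ g (r (c h)) < g (r cstar) ≤ 0
    have hrchIci : r (c h) ∈ Ici (0:ℝ) := (hrpos _ hchpos).le
    have hBneg : g (r (c h)) < 0 := by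
      have h1 : r (c h) < r cstar :=
        hrsm ⟨hchpos.le, hchlt.le⟩ ⟨hc.le, le_rfl⟩ hchlt
      have h2 : g (r (c h)) < g (r cstar) :=
        hg hrchIci ((hrpos _ hc).le) h1
      linarith
    have hptle : ∀ z ∈ Icc (0:ℝ) h, g (r (c z)) ≤ g (r (c h)) := by
      intro z hz
      exact hg.monotoneOn (hrpos _ (cpos z hz)).le hrchIci
        (hrmono (monoc hz hhmem hz.2))
    have hmonoφ : MonotoneOn (fun z => g (r (c z))) (uIcc (0:ℝ) h) := by
      rw [uIcc_of_le hh.le]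
      intro z hz w hw hzw
      exact hg.monotoneOn (hrpos _ (cpos z hz)).le (hrpos _ (cpos w hw)).le
        (hrmono (monoc hz hw hzw))
    have hφint : IntervalIntegrable (fun z => g (r (c z))) volume 0 h :=
      hmonoφ.intervalIntegrable
    have hle : (∫ z in (0:ℝ)..h, g (r (c z))) ≤ ∫ _ in (0:ℝ)..h, g (r (c h)) := by
      apply integral_mono_on hh.le hφint intervalIntegrable_const hptle
    rw [intervalIntegral.integral_const, smul_eq_mul, sub_zero] at hle
    nlinarith
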